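/- For the path-graph dynamics on N nodes with N even, there exists an extended equilibrium x* such that x*_N - x*_1 = (N-2)²/4; specifically, taking k₁ = 0 and k_i - k_{i-1} = i - 2 for i ≤ (N+2)/2 and k_i - k_{i-1} = N - i for i > (N+2)/2, the point x* defined by x*_1 = k₂, x*_i = (k_{i-1} + k_{i+1})/2 for 2 ≤ i ≤ N-1, x*_N = k_{N-1} is an extended equilibrium with x*_N - x*_1 = (N-2)²/4. -/
import Mathlib


/-- `x` is an extended equilibrium of the path-graph dynamics with quantization
levels `k` (components indexed by 1,…,N). -/
def IsPathExtendedEquilibrium (N : ℕ) (x : ℕ → ℝ) (k : ℕ → ℤ) : Prop :=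
  ((k 2 : ℝ) - x 1 = 0) ∧
  (∀ i : ℕ, 2 ≤ i → i ≤ N - 1 → (k (i - 1) : ℝ) + (k (i + 1) : ℝ) - 2 * x i = 0) ∧
  ((k (N - 1) : ℝ) - x N = 0) ∧
  (∀ i : ℕ, 1 ≤ i → i ≤ N → (k i : ℝ) - 1/2 ≤ x i ∧ x i ≤ (k i : ℝ) + 1/2)

/-- The quantization levels. -/
def kk (N : ℕ) : ℕ → ℤ
  | 0 => 0
  | 1 => 0
  | (i+2) => kk N (i+1) + (if 2*(i+2) ≤ N+2 then (i:ℤ) else (N:ℤ) - (i+2))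

lemma kk_diff (N i : ℕ) (hi : 2 ≤ i) :
    kk N i = kk N (i-1) + (if 2*i ≤ N+2 then (i:ℤ)-2 else (N:ℤ)-i) := by
  obtain ⟨j, rfl⟩ : ∃ j, i = j+2 := ⟨i-2, by omega⟩
  show kk N (j+2) = kk N (j+1) + _
  simp only [kk]
  split_ifs <;> push_cast <;> ring

lemma kk_left (N : ℕ) : ∀ i, 1 ≤ i → (2*i ≤ N+2 → 2 * kk N i = ((i:ℤ)-1)*((i:ℤ)-2)) := by
  intro i hi
  induction i, hi using Nat.le_induction with
  | base => intro _; simp [kk]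
  | succ n hn ih =>
    intro h
    have ihh := ih (by omega)
    have hd := kk_diff N (n+1) (by omega)
    rw [if_pos h] at hd
    simp only [Nat.add_sub_cancel] at hd
    push_cast at hd ihh ⊢
    linear_combination ihh + 2*hd

lemma kk_right (N m : ℕ) (hm : N = m + m) :
    ∀ i, m+1 ≤ i → i ≤ N →
      4 * kk N i = ((N:ℤ)-2)^2 - 2*((N:ℤ)-i-1)*((N:ℤ)-i) := by
  intro i hi
  induction i, hi using Nat.le_induction with
  | base =>
    intro _
    have h1 := kk_left N (m+1) (by omega) (by omega)
    subst hm
    push_cast at h1 ⊢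
    linear_combination 2*h1
  | succ n hn ih =>
    intro h
    have ihh := ih (by omega)
    have hd := kk_diff N (n+1) (by omega)
    rw [if_neg (by omega)] at hd
    simp only [Nat.add_sub_cancel] at hd
    push_cast at hd ihh ⊢
    linear_combination ihh + 4*hd

theorem path_equilibrium_achieving_bound (N : ℕ) (hN : 4 ≤ N) (hNe : Even N) :
    ∃ (k : ℕ → ℤ) (x : ℕ → ℝ),
      k 1 = 0 ∧
      (∀ i : ℕ, 2 ≤ i → i ≤ N →
        k i - k (i - 1) = if 2 * i ≤ N + 2 then (i : ℤ) - 2 else (N : ℤ) - i) ∧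
      x 1 = (k 2 : ℝ) ∧
      (∀ i : ℕ, 2 ≤ i → i ≤ N - 1 → x i = ((k (i - 1) : ℝ) + (k (i + 1) : ℝ)) / 2) ∧
      x N = (k (N - 1) : ℝ) ∧
      IsPathExtendedEquilibrium N x k ∧
      x N - x 1 = ((N : ℝ) - 2) ^ 2 / 4 := by
  obtain ⟨m, hm⟩ := hNe
  set k : ℕ → ℤ := kk N with hk
  set x : ℕ → ℝ := fun i =>
    if i = 1 then ((k 2 : ℤ) : ℝ) else if i = N then ((k (N-1) : ℤ) : ℝ)
    else ((k (i-1) : ℝ) + (k (i+1) : ℝ)) / 2 with hx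
  have hk2 : k 2 = 0 := by
    have := kk_left N 2 (by omega) (by omega)
    rw [← hk] at this; omega
  have hkNN : k N = k (N-1) := by
    have hd := kk_diff N N (by omega)
    rw [if_neg (by omega)] at hd
    rw [← hk] at hd
    push_cast at hd
    linarith [hd]
  have hx1 : x 1 = (k 2 : ℝ) := by simp [hx]
  have hxN : x N = (k (N-1) : ℝ) := by
    simp only [hx]
    rw [if_neg (by omega)]
    simp
  have hxmid : ∀ i : ℕ, 2 ≤ i → i ≤ N - 1 →
      x i = ((k (i - 1) : ℝ) + (k (i + 1) : ℝ)) / 2 := by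
    intro i h2 h3
    simp only [hx]
    rw [if_neg (by omega), if_neg (by omega)]
  have hkN1 : 4 * k (N-1) = ((N:ℤ)-2)^2 := by
    have h := kk_right N m hm (N-1) (by omega) (by omega)
    rw [← hk] at h
    have hc : ((N-1:ℕ):ℤ) = (N:ℤ) - 1 := by push_cast [Nat.cast_sub (by omega : 1 ≤ N)]; ring
    rw [hc] at h
    linear_combination h
  refine ⟨k, x, rfl, ?_, hx1, hxmid, hxN, ⟨?_, ?_, ?_, ?_⟩, ?_⟩
  · intro i h2 _
    rw [hk, kk_diff N i h2]; ring
  · rw [hx1]; ring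
  · intro i h2 h3
    rw [hxmid i h2 h3]; ring
  · rw [hxN]; ring
  · intro i h1 h2
    rcases eq_or_ne i 1 with rfl | hne1
    · rw [hx1, hk2]
      have h0 : k 1 = (0:ℤ) := rfl
      rw [h0]
      norm_num
    rcases eq_or_ne i N with rfl | hneN
    · rw [hxN, hkNN]
      constructor <;> linarith
    · have h2' : 2 ≤ i := by omega
      have h3' : i ≤ N - 1 := by omega
      have hd1 := kk_diff N i h2'
      have hd2 := kk_diff N (i+1) (by omega)
      simp only [Nat.add_sub_cancel] at hd2
      rw [← hk] at hd1 hd2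
      have key : -1 ≤ (k (i-1) + k (i+1)) - 2 * k i ∧
          (k (i-1) + k (i+1)) - 2 * k i ≤ 1 := by
        split_ifs at hd1 hd2 <;> push_cast at hd1 hd2 <;> omega
      have kc1 : (-1 : ℝ) ≤ ((k (i-1) : ℝ) + (k (i+1) : ℝ)) - 2 * (k i : ℝ) := by
        exact_mod_cast key.1
      have kc2 : ((k (i-1) : ℝ) + (k (i+1) : ℝ)) - 2 * (k i : ℝ) ≤ 1 := by
        exact_mod_cast key.2
      rw [hxmid i h2' h3']
      constructor <;> linarith
  · rw [hx1, hxN, hk2]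
    have : (4:ℝ) * (k (N-1) : ℝ) = ((N:ℝ)-2)^2 := by exact_mod_cast hkN1
    push_cast
    linarith
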